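/- arXiv:1902.05130 — 4 statements merged into one kernel-verified Lean document; each statement's English description precedes it below -/
import Mathlib

section
/- Let a, b be nonzero vectors in ℝⁿ with aᵀb ≠ 0, and let κ₀, κ₁ > 0. Then the matrix H = κ₀(|a|² I − a aᵀ) + κ₁ b bᵀ is symmetric and positive definite, and satisfies H M = Mᵀ H where M = I + a bᵀ. -/
open Matrix

private lemma vv_mul_vv {n : ℕ} (a b c d : Fin n → ℝ) :
    vecMulVec a b * vecMulVec c d = (b ⬝ᵥ c) • vecMulVec a d := by
  ext i j
  simp only [mul_apply, vecMulVec_apply, Matrix.smul_apply, smul_eq_mul, dotProduct,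
    Finset.sum_mul]
  apply Finset.sum_congr rfl
  intro k _
  ring

private lemma vv_mulVec {n : ℕ} (a b v : Fin n → ℝ) :
    vecMulVec a b *ᵥ v = (b ⬝ᵥ v) • a := by
  ext i
  simp only [mulVec, dotProduct, vecMulVec_apply, Pi.smul_apply, smul_eq_mul,
    Finset.sum_mul]
  apply Finset.sum_congr rfl
  intro k _
  ring

private lemma dp_self_nonneg {n : ℕ} (v : Fin n → ℝ) : 0 ≤ v ⬝ᵥ v :=
  Finset.sum_nonneg fun i _ => mul_self_nonneg (v i)

/-- Cauchy–Schwarz via the Lagrange-style vector. -/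
private lemma cs_key {n : ℕ} (a x : Fin n → ℝ) :
    ((a ⬝ᵥ a) • x - (a ⬝ᵥ x) • a) ⬝ᵥ ((a ⬝ᵥ a) • x - (a ⬝ᵥ x) • a)
      = (a ⬝ᵥ a) * ((a ⬝ᵥ a) * (x ⬝ᵥ x) - (a ⬝ᵥ x) ^ 2) := by
  simp only [sub_dotProduct, dotProduct_sub, smul_dotProduct, dotProduct_smul,
    smul_eq_mul]
  rw [dotProduct_comm x a]
  ring

/-- If `a, b ∈ ℝⁿ` are nonzero with `aᵀb ≠ 0` and `κ₀, κ₁ > 0`, then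
`H = κ₀(|a|² I − a aᵀ) + κ₁ b bᵀ` is symmetric positive definite and satisfies
`H M = Mᵀ H` where `M = I + a bᵀ`. -/
theorem symmetrizer_of_rank_one_perturbation {n : ℕ} (a b : Fin n → ℝ)
    (ha : a ≠ 0) (hb : b ≠ 0) (hab : a ⬝ᵥ b ≠ 0)
    (κ₀ κ₁ : ℝ) (hκ₀ : 0 < κ₀) (hκ₁ : 0 < κ₁)
    (M H : Matrix (Fin n) (Fin n) ℝ)
    (hM : M = 1 + vecMulVec a b)
    (hH : H = κ₀ • ((a ⬝ᵥ a) • (1 : Matrix (Fin n) (Fin n) ℝ) - vecMulVec a a)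
            + κ₁ • vecMulVec b b) :
    H.IsSymm ∧ H.PosDef ∧ H * M = Mᵀ * H := by
  have haa : 0 < a ⬝ᵥ a := by
    rcases lt_or_eq_of_le (dp_self_nonneg a) with h | h
    · exact h
    · exact absurd (dotProduct_self_eq_zero.mp h.symm) ha
  have hsymm : H.IsSymm := by
    subst hH
    unfold Matrix.IsSymm
    ext i j
    simp [transpose_apply, vecMulVec_apply, one_apply]
    rcases eq_or_ne i j with rfl | hij
    · ring
    · simp [hij, Ne.symm hij]; ring
  refine ⟨hsymm, ?_, ?_⟩
  · refine posDef_iff_dotProduct_mulVec.mpr ⟨hsymm, ?_⟩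
    intro x hx
    have hHx : H *ᵥ x = (κ₀ * (a ⬝ᵥ a)) • x - (κ₀ * (a ⬝ᵥ x)) • a
        + (κ₁ * (b ⬝ᵥ x)) • b := by
      subst hH
      simp only [add_mulVec, smul_mulVec, sub_mulVec, Matrix.smul_mulVec,
        one_mulVec, vv_mulVec, smul_smul]
      rw [smul_sub]
      simp [smul_smul]
    have hq : star x ⬝ᵥ (H *ᵥ x)
        = κ₀ * ((a ⬝ᵥ a) * (x ⬝ᵥ x) - (a ⬝ᵥ x) ^ 2) + κ₁ * (b ⬝ᵥ x) ^ 2 := by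
      rw [hHx]
      simp only [star_trivial, dotProduct_add, dotProduct_sub, dotProduct_smul,
        smul_eq_mul]
      rw [dotProduct_comm x a, dotProduct_comm x b]
      ring
    rw [RCLike.pos_iff_exists_ofReal]
    refine ⟨κ₀ * ((a ⬝ᵥ a) * (x ⬝ᵥ x) - (a ⬝ᵥ x) ^ 2) + κ₁ * (b ⬝ᵥ x) ^ 2, ?_, ?_⟩
    · -- positivity of the quadratic form
      have hcs : 0 ≤ (a ⬝ᵥ a) * (x ⬝ᵥ x) - (a ⬝ᵥ x) ^ 2 := by
        have := dp_self_nonneg ((a ⬝ᵥ a) • x - (a ⬝ᵥ x) • a)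
        rw [cs_key] at this
        exact nonneg_of_mul_nonneg_right this haa
      rcases eq_or_ne (b ⬝ᵥ x) 0 with hbx | hbx
      · -- need strict Cauchy–Schwarz
        have hcs' : 0 < (a ⬝ᵥ a) * (x ⬝ᵥ x) - (a ⬝ᵥ x) ^ 2 := by
          rcases lt_or_eq_of_le hcs with h | h
          · exact h
          · exfalso
            have hw : ((a ⬝ᵥ a) • x - (a ⬝ᵥ x) • a) ⬝ᵥ
                ((a ⬝ᵥ a) • x - (a ⬝ᵥ x) • a) = 0 := by
              rw [cs_key, ← h, mul_zero]
            have hw0 : (a ⬝ᵥ a) • x - (a ⬝ᵥ x) • a = 0 :=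
              dotProduct_self_eq_zero.mp hw
            have hxa : (a ⬝ᵥ a) • x = (a ⬝ᵥ x) • a := sub_eq_zero.mp hw0
            have hbdot : (a ⬝ᵥ a) * (b ⬝ᵥ x) = (a ⬝ᵥ x) * (b ⬝ᵥ a) := by
              have := congrArg (fun v => b ⬝ᵥ v) hxa
              simpa [dotProduct_smul, smul_eq_mul] using this
            rw [hbx, mul_zero] at hbdot
            have hba : b ⬝ᵥ a ≠ 0 := by rwa [dotProduct_comm]
            have hax : a ⬝ᵥ x = 0 := by
              rcases mul_eq_zero.mp hbdot.symm with h' | h'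
              · exact h'
              · exact absurd h' hba
            rw [hax, zero_smul] at hxa
            have : x = 0 := by
              have := smul_eq_zero.mp hxa
              rcases this with h' | h'
              · exact absurd h' (ne_of_gt haa)
              · exact h'
            exact hx this
        have : 0 < κ₀ * ((a ⬝ᵥ a) * (x ⬝ᵥ x) - (a ⬝ᵥ x) ^ 2) := mul_pos hκ₀ hcs'
        nlinarith [sq_nonneg (b ⬝ᵥ x)]
      · have h1 : 0 < κ₁ * (b ⬝ᵥ x) ^ 2 := mul_pos hκ₁ (by positivity)
        nlinarith
    · rw [hq]; norm_num
  · -- H M = Mᵀ H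
    subst hH hM
    have hHsymm := hsymm
    have hT : (vecMulVec a b)ᵀ = vecMulVec b a := by
      ext i j; simp [vecMulVec_apply, transpose_apply, mul_comm]
    simp only [transpose_add, transpose_one, hT, mul_add, add_mul, one_mul,
      mul_one, Matrix.smul_mul, Matrix.mul_smul, Matrix.sub_mul, Matrix.mul_sub,
      vv_mul_vv]
    rw [dotProduct_comm b a]
    abel
end

section
/- Let a, b be nonzero vectors in ℝⁿ with aᵀb ≠ 0 and κ₀, κ₁ > 0, and set H = κ₀(|a|² I − a aᵀ) + κ₁ b bᵀ and M = I + a bᵀ. Then H M is symmetric, and equals κ₀(|a|² I − a aᵀ) + κ₁(1 + aᵀb) b bᵀ. -/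
open Matrix

lemma vecMulVec_mul_vecMulVec' {n : ℕ} (x y u v : Fin n → ℝ) :
    vecMulVec x y * vecMulVec u v = (y ⬝ᵥ u) • vecMulVec x v := by
  ext i j
  simp only [mul_apply, vecMulVec_apply, Matrix.smul_apply, smul_eq_mul, dotProduct, Finset.sum_mul]
  exact Finset.sum_congr rfl fun k _ => by ring

/-- With `H = κ₀(|a|² I − a aᵀ) + κ₁ b bᵀ` and `M = I + a bᵀ`, the product `H M`
is symmetric and equals `κ₀(|a|² I − a aᵀ) + κ₁(1 + aᵀb) b bᵀ`. -/
theorem symmetrizer_mul_rank_one_perturbation {n : ℕ} (a b : Fin n → ℝ)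
    (ha : a ≠ 0) (hb : b ≠ 0) (hab : a ⬝ᵥ b ≠ 0)
    (κ₀ κ₁ : ℝ) (hκ₀ : 0 < κ₀) (hκ₁ : 0 < κ₁)
    (M H : Matrix (Fin n) (Fin n) ℝ)
    (hM : M = 1 + vecMulVec a b)
    (hH : H = κ₀ • ((a ⬝ᵥ a) • (1 : Matrix (Fin n) (Fin n) ℝ) - vecMulVec a a)
            + κ₁ • vecMulVec b b) :
    (H * M).IsSymm ∧
    H * M = κ₀ • ((a ⬝ᵥ a) • (1 : Matrix (Fin n) (Fin n) ℝ) - vecMulVec a a)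
          + (κ₁ * (1 + a ⬝ᵥ b)) • vecMulVec b b := by
  have key : H * M = κ₀ • ((a ⬝ᵥ a) • (1 : Matrix (Fin n) (Fin n) ℝ) - vecMulVec a a)
          + (κ₁ * (1 + a ⬝ᵥ b)) • vecMulVec b b := by
    subst hM hH
    rw [mul_add, add_mul, add_mul, mul_one, mul_one, smul_mul_assoc, smul_mul_assoc,
      sub_mul, smul_mul_assoc, one_mul, vecMulVec_mul_vecMulVec', vecMulVec_mul_vecMulVec',
      dotProduct_comm b a]
    module
  refine ⟨?_, key⟩
  rw [key]
  unfold Matrix.IsSymm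
  rw [transpose_add, transpose_smul, transpose_smul, transpose_sub, transpose_smul,
    transpose_one]
  congr 1 <;> ext i j <;> simp [vecMulVec_apply, mul_comm]
end

section
/- Let P be a real (n+m)×(n+m) matrix in block form P = [[0, Q],[R, 0]] with Q of size n×m and R of size m×n, and suppose M := Q R is diagonalizable with all eigenvalues strictly positive. Then P is diagonalizable over ℝ, and its eigenvalues are 0 (with multiplicity m − n, with eigenvectors (0, w) for w ∈ ker Q) together with ±√μ for each eigenvalue μ of M. -/
open Matrix

/-- If `P = [[0,Q],[R,0]]` in block form and `M := Q R` is diagonalizable with all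
eigenvalues strictly positive, then `P` is diagonalizable over `ℝ`; its zero
eigenspace consists of the vectors `(0,w)` with `w ∈ ker Q` and has dimension
`m - n`, and for each eigenvector `e` of `M` with eigenvalue `λ² > 0`, the
vectors `(e, ±λ⁻¹ R e)` are eigenvectors of `P` with eigenvalues `±λ`. -/
theorem block_offdiagonal_diagonalizable {n m : ℕ} (hnm : n ≤ m)
    (Q : Matrix (Fin n) (Fin m) ℝ) (R : Matrix (Fin m) (Fin n) ℝ)
    (P : Matrix (Fin n ⊕ Fin m) (Fin n ⊕ Fin m) ℝ)
    (hP : P = fromBlocks 0 Q R 0)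
    (hM : ∃ (S D : Matrix (Fin n) (Fin n) ℝ), IsUnit S.det ∧ D.IsDiag ∧
      Q * R = S * D * S⁻¹ ∧ ∀ i, 0 < D i i) :
    (∃ (S' D' : Matrix (Fin n ⊕ Fin m) (Fin n ⊕ Fin m) ℝ),
      IsUnit S'.det ∧ D'.IsDiag ∧ P = S' * D' * S'⁻¹) ∧
    (∀ w : Fin m → ℝ, Q.mulVec w = 0 → P.mulVec (Sum.elim 0 w) = 0) ∧
    Module.finrank ℝ (LinearMap.ker Q.mulVecLin) = m - n ∧
    (∀ (lam : ℝ) (e : Fin n → ℝ), lam ≠ 0 → e ≠ 0 →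
      (Q * R).mulVec e = (lam ^ 2) • e →
      P.mulVec (Sum.elim e (lam⁻¹ • R.mulVec e)) = lam • Sum.elim e (lam⁻¹ • R.mulVec e) ∧
      P.mulVec (Sum.elim e (-(lam⁻¹) • R.mulVec e))
        = (-lam) • Sum.elim e (-(lam⁻¹) • R.mulVec e)) := by
  obtain ⟨S, D, hS, hD, hQR, hDpos⟩ := hM
  -- Part 3: rank-nullity
  have part3 : Module.finrank ℝ (LinearMap.ker Q.mulVecLin) = m - n := by
    have hDd : Matrix.diagonal (fun i => D i i) = D := hD.diagonal_diag
    set Dinv : Matrix (Fin n) (Fin n) ℝ := Matrix.diagonal (fun i => (D i i)⁻¹) with hDinv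
    have hDDinv : D * Dinv = 1 := by
      rw [← hDd, hDinv, diagonal_mul_diagonal]
      rw [show (fun i => D i i * (D i i)⁻¹) = fun _ => (1:ℝ) from
        funext fun i => mul_inv_cancel₀ (hDpos i).ne', diagonal_one]
    have hright : Q * (R * (S * (Dinv * S⁻¹))) = 1 := by
      rw [← Matrix.mul_assoc Q R, hQR]
      calc S * D * S⁻¹ * (S * (Dinv * S⁻¹))
          = S * D * (S⁻¹ * S) * (Dinv * S⁻¹) := by
            simp only [Matrix.mul_assoc]
        _ = S * (D * Dinv) * S⁻¹ := by
            rw [nonsing_inv_mul S hS]; simp only [Matrix.mul_one, Matrix.mul_assoc]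
        _ = 1 := by rw [hDDinv, Matrix.mul_one, mul_nonsing_inv S hS]
    have hsurj : Function.Surjective Q.mulVecLin := by
      intro y
      refine ⟨(R * (S * (Dinv * S⁻¹))).mulVec y, ?_⟩
      rw [mulVecLin_apply, mulVec_mulVec, hright, one_mulVec]
    have hrn := LinearMap.finrank_range_add_finrank_ker Q.mulVecLin
    rw [LinearMap.range_eq_top.mpr hsurj, finrank_top] at hrn
    simp [Module.finrank_fintype_fun_eq_card] at hrn
    omega
  -- Part 1: diagonalization
  have part1 : (∃ (S' D' : Matrix (Fin n ⊕ Fin m) (Fin n ⊕ Fin m) ℝ),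
      IsUnit S'.det ∧ D'.IsDiag ∧ P = S' * D' * S'⁻¹) := by
    have hker : Module.finrank ℝ (LinearMap.ker Q.mulVecLin) = m - n := part3
    -- square roots of eigenvalues
    set lamv : Fin n → ℝ := fun i => Real.sqrt (D i i) with hlamv
    have hlampos : ∀ i, 0 < lamv i := fun i => Real.sqrt_pos.mpr (hDpos i)
    set Λ : Matrix (Fin n) (Fin n) ℝ := diagonal lamv with hΛ
    set Λi : Matrix (Fin n) (Fin n) ℝ := diagonal (fun i => (lamv i)⁻¹) with hΛi
    have hΛΛ : Λ * Λ = D := by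
      rw [hΛ, diagonal_mul_diagonal,
        show (fun i => lamv i * lamv i) = fun i => D i i from
          funext fun i => Real.mul_self_sqrt (hDpos i).le]
      exact hD.diagonal_diag
    have hΛΛi : Λ * Λi = 1 := by
      rw [hΛ, hΛi, diagonal_mul_diagonal,
        show (fun i => lamv i * (lamv i)⁻¹) = fun _ => (1:ℝ) from
          funext fun i => mul_inv_cancel₀ (hlampos i).ne', diagonal_one]
    have hΛiΛ : Λi * Λ = 1 := by
      rw [hΛ, hΛi, diagonal_mul_diagonal,
        show (fun i => (lamv i)⁻¹ * lamv i) = fun _ => (1:ℝ) from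
          funext fun i => inv_mul_cancel₀ (hlampos i).ne', diagonal_one]
    have hΛdet : IsUnit Λ.det := by
      rw [hΛ, det_diagonal]
      exact isUnit_iff_ne_zero.mpr (Finset.prod_ne_zero_iff.mpr fun i _ => (hlampos i).ne')
    set E : Matrix (Fin m) (Fin n) ℝ := R * S * Λi with hE
    have hQE : Q * E = S * Λ := by
      rw [hE, ← Matrix.mul_assoc, ← Matrix.mul_assoc, hQR]
      calc S * D * S⁻¹ * S * Λi = S * D * (S⁻¹ * S) * Λi := by simp only [Matrix.mul_assoc]
        _ = S * (Λ * (Λ * Λi)) := by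
            rw [nonsing_inv_mul S hS, Matrix.mul_one, ← hΛΛ]; simp only [Matrix.mul_assoc]
        _ = S * Λ := by rw [hΛΛi, Matrix.mul_one]
    have hEΛ : E * Λ = R * S := by
      rw [hE, Matrix.mul_assoc, hΛiΛ, Matrix.mul_one]
    -- basis of the kernel of Q
    set K := LinearMap.ker Q.mulVecLin with hK
    have b : Module.Basis (Fin (m - n)) ℝ K := Module.finBasisOfFinrankEq ℝ K hker
    set W : Matrix (Fin m) (Fin (m - n)) ℝ := Matrix.of (fun i j => (b j : Fin m → ℝ) i) with hW
    have hQW : Q * W = 0 := by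
      ext i j
      have hbj : Q.mulVecLin (b j : Fin m → ℝ) = 0 := (b j).2
      have h2 := congrFun hbj i
      rw [mulVecLin_apply] at h2
      simp only [mulVec, dotProduct, Pi.zero_apply] at h2
      simp only [mul_apply, hW, of_apply, Matrix.zero_apply]
      exact h2
    have hWinj : ∀ c : Fin (m - n) → ℝ, W.mulVec c = 0 → c = 0 := by
      intro c hc
      have hsum : (∑ j, c j • b j : K) = 0 := by
        have hco : (↑(∑ j, c j • b j : K) : Fin m → ℝ) = W.mulVec c := by
          push_cast
          funext i
          simp [hW, mulVec, dotProduct, mul_comm]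
        apply Subtype.ext
        rw [hco, hc]
        rfl
      exact funext fun j => (Fintype.linearIndependent_iff.mp b.linearIndependent c hsum) j
    -- index juggling
    have hmn : n + (m - n) = m := Nat.add_sub_cancel' hnm
    set σ : (Fin n ⊕ Fin (m - n)) ≃ Fin m := finSumFinEquiv.trans (finCongr hmn) with hσ
    set τ : (Fin n ⊕ (Fin n ⊕ Fin (m - n))) ≃ (Fin n ⊕ Fin m) :=
      Equiv.sumCongr (Equiv.refl (Fin n)) σ with hτ
    set S₀ : Matrix (Fin n ⊕ Fin m) (Fin n ⊕ (Fin n ⊕ Fin (m - n))) ℝ :=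
      fromBlocks S (fromCols S 0) E (fromCols (-E) W) with hS₀
    set D₀ : Matrix (Fin n ⊕ (Fin n ⊕ Fin (m - n))) (Fin n ⊕ (Fin n ⊕ Fin (m - n))) ℝ :=
      fromBlocks Λ 0 0 (fromBlocks (-Λ) 0 0 0) with hD₀
    set S' : Matrix (Fin n ⊕ Fin m) (Fin n ⊕ Fin m) ℝ := S₀.submatrix id τ.symm with hS'
    set D' : Matrix (Fin n ⊕ Fin m) (Fin n ⊕ Fin m) ℝ := D₀.submatrix τ.symm τ.symm with hD'
    -- the key algebraic identity
    have hPS₀ : P * S₀ = S₀ * D₀ := by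
      rw [hP, hS₀, hD₀, fromBlocks_multiply, fromBlocks_multiply]
      simp only [fromCols_mul_fromBlocks, mul_fromCols, Matrix.zero_mul,
        Matrix.mul_zero, add_zero, zero_add,
        Matrix.mul_neg, Matrix.neg_mul, neg_neg, hQE, hQW, hEΛ, fromCols_zero]
    -- invertibility of S'
    have hSmulVec : Function.Injective S.mulVec :=
      mulVec_injective_iff_isUnit.mpr ((isUnit_iff_isUnit_det S).mpr hS)
    have hSΛinj : Function.Injective (S * Λ).mulVec :=
      mulVec_injective_iff_isUnit.mpr (isUnit_iff_isUnit_det _ |>.mpr (by rw [det_mul]; exact hS.mul hΛdet))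
    have hS'det : IsUnit S'.det := by
      rw [isUnit_iff_ne_zero]
      intro hdet
      obtain ⟨v, hv0, hv⟩ := Matrix.exists_mulVec_eq_zero_iff.mpr hdet
      set u : (Fin n ⊕ (Fin n ⊕ Fin (m - n))) → ℝ := v ∘ τ with hu
      have hu0 : S₀.mulVec u = 0 := by
        rw [hS', submatrix_mulVec_equiv] at hv
        have : (S₀.mulVec (v ∘ τ.symm.symm)) = 0 := by
          funext i
          exact congrFun hv i
        simpa using this
      set a : Fin n → ℝ := u ∘ Sum.inl with ha
      set a' : Fin n → ℝ := fun j => u (Sum.inr (Sum.inl j)) with ha'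
      set c : Fin (m - n) → ℝ := fun j => u (Sum.inr (Sum.inr j)) with hc
      have hueq : u ∘ Sum.inr = Sum.elim a' c := by
        funext j
        cases j <;> rfl
      rw [hS₀, fromBlocks_mulVec, hueq, fromCols_mulVec_sumElim,
        fromCols_mulVec_sumElim] at hu0
      have htop : S.mulVec a + (S.mulVec a' + (0 : Matrix (Fin n) (Fin (m-n)) ℝ).mulVec c) = 0 :=
        funext fun i => congrFun hu0 (Sum.inl i)
      have hbot : E.mulVec a + ((-E).mulVec a' + W.mulVec c) = 0 :=
        funext fun i => congrFun hu0 (Sum.inr i)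
      rw [zero_mulVec, add_zero, ← mulVec_add] at htop
      have haa' : a + a' = 0 := hSmulVec (by rw [htop, mulVec_zero])
      -- apply Q to the bottom equation
      have hQbot : Q.mulVec (E.mulVec a + ((-E).mulVec a' + W.mulVec c)) = 0 := by
        rw [hbot, mulVec_zero]
      rw [mulVec_add, mulVec_add, mulVec_mulVec, mulVec_mulVec, mulVec_mulVec,
        Matrix.mul_neg, hQE, hQW, neg_mulVec, zero_mulVec, add_zero, ← sub_eq_add_neg,
        ← mulVec_sub] at hQbot
      have haa'2 : a - a' = 0 := hSΛinj (by rw [hQbot, mulVec_zero])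
      have ha0 : a = 0 := by
        have h3 : a + a = 0 := by
          have h4 := congrArg₂ (· + ·) haa' haa'2
          simpa [add_add_sub_cancel] using h4
        have h5 : (2 : ℝ) • a = 0 := by rw [two_smul]; exact h3
        exact (smul_eq_zero.mp h5).resolve_left (by norm_num)
      have ha'0 : a' = 0 := by
        have h3 : a' = -a := by
          have := congrFun haa'
          funext i
          have h6 := congrFun haa' i
          simp only [Pi.add_apply, Pi.zero_apply, Pi.neg_apply] at h6 ⊢
          linarith
        rw [h3, ha0, neg_zero]
      have hc0 : c = 0 := by
        apply hWinj
        have := hbot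
        rw [ha0, ha'0, mulVec_zero, mulVec_zero, zero_add, zero_add] at this
        exact this
      apply hv0
      funext i
      have : u (τ.symm i) = 0 := by
        rcases τ.symm i with j | (j | j)
        · exact congrFun ha0 j
        · exact congrFun ha'0 j
        · exact congrFun hc0 j
      simpa [hu] using this
    refine ⟨S', D', hS'det, ?_, ?_⟩
    · rw [hD']
      refine Matrix.IsDiag.submatrix ?_ τ.symm.injective
      rw [hD₀]
      refine Matrix.IsDiag.fromBlocks (isDiag_diagonal _) ?_
      refine Matrix.IsDiag.fromBlocks ?_ isDiag_zero
      exact (hΛ ▸ isDiag_diagonal lamv : Λ.IsDiag).neg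
    · have hmul : P * S' = S' * D' := by
        calc P * S' = (P * S₀).submatrix id ⇑τ.symm := by
              rw [← submatrix_mul_equiv P S₀ id (Equiv.refl _) τ.symm]
              simp [hS']
          _ = (S₀ * D₀).submatrix id ⇑τ.symm := by rw [hPS₀]
          _ = S' * D' := by
              rw [hS', hD', submatrix_mul_equiv S₀ D₀ id τ.symm ⇑τ.symm]
      calc P = P * (S' * S'⁻¹) := by rw [mul_nonsing_inv S' hS'det, Matrix.mul_one]
        _ = (P * S') * S'⁻¹ := by rw [Matrix.mul_assoc]
        _ = S' * D' * S'⁻¹ := by rw [hmul]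
  refine ⟨part1, ?_, part3, ?_⟩
  · subst hP
    intro w hw
    funext i
    cases i <;> simp [fromBlocks_mulVec, hw]
  · subst hP
    intro lam e hlam he hev
    have key : ∀ c : ℝ, (fromBlocks 0 Q R 0).mulVec (Sum.elim e (c • R.mulVec e)) =
        Sum.elim ((c * lam ^ 2) • e) (R.mulVec e) := by
      intro c
      funext i
      cases i with
      | inl i =>
        simp [fromBlocks_mulVec, mulVec_smul, mulVec_mulVec, hev, smul_smul]
      | inr i =>
        simp [fromBlocks_mulVec]
    constructor
    · rw [key]
      funext i
      cases i with
      | inl i =>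
        simp only [Sum.elim_inl, Pi.smul_apply]
        congr 1
        field_simp
      | inr i =>
        simp only [Sum.elim_inr, Pi.smul_apply, smul_smul]
        rw [mul_inv_cancel₀ hlam]; simp
    · rw [key]
      funext i
      cases i with
      | inl i =>
        simp only [Sum.elim_inl, Pi.smul_apply]
        congr 1
        field_simp
      | inr i =>
        simp only [Sum.elim_inr, Pi.smul_apply, smul_smul]
        rw [neg_mul_neg, mul_inv_cancel₀ hlam]; simp
end

section
/- Define σ := 3Γ(1 + ΔΓ) and s₁² := Γ(2 + 3ΔΓ)/(1 + ΔΓ + (1 − Δ)(1 + 3ΔΓ + 3Δ²Γ²)), assuming the denominator is nonzero and 2 + 3ΔΓ ≠ 0. Then the two symmetry relations Γ = −(Γ − σ)/(2 + 3ΔΓ) and Γ/s₁² − (1 + ΔΓ) = −Δ(1 + Γ + Δσ)/(2 + 3ΔΓ) both hold. -/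
/-- With `σ := 3Γ(1 + ΔΓ)` and
`s₁² := Γ(2 + 3ΔΓ)/(1 + ΔΓ + (1 − Δ)(1 + 3ΔΓ + 3Δ²Γ²))` (denominator nonzero,
`2 + 3ΔΓ ≠ 0`, `Γ ≠ 0` so that `s₁² ≠ 0`), the two symmetry relations
`Γ = −(Γ − σ)/(2 + 3ΔΓ)` and `Γ/s₁² − (1 + ΔΓ) = −Δ(1 + Γ + Δσ)/(2 + 3ΔΓ)` hold. -/
theorem symmetric_hyperbolicity_relations (Δ Γ σ s₁sq : ℝ)
    (hσ : σ = 3 * Γ * (1 + Δ * Γ))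
    (hden : 1 + Δ * Γ + (1 - Δ) * (1 + 3 * Δ * Γ + 3 * Δ ^ 2 * Γ ^ 2) ≠ 0)
    (hs : s₁sq = Γ * (2 + 3 * Δ * Γ)
      / (1 + Δ * Γ + (1 - Δ) * (1 + 3 * Δ * Γ + 3 * Δ ^ 2 * Γ ^ 2)))
    (h2 : 2 + 3 * Δ * Γ ≠ 0) (hΓ : Γ ≠ 0) :
    Γ = -(Γ - σ) / (2 + 3 * Δ * Γ) ∧
    Γ / s₁sq - (1 + Δ * Γ) = -Δ * (1 + Γ + Δ * σ) / (2 + 3 * Δ * Γ) := by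
  constructor
  · rw [hσ]; rw [eq_div_iff h2]; ring
  · rw [hσ, hs]
    rw [div_div_eq_mul_div]
    have := mul_ne_zero hΓ h2
    rw [div_sub' this, div_eq_div_iff this h2]
    ring
end
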